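/- Let X and Y be finite nonempty sets, let π₀, π₁ ≥ 0 with π₀ + π₁ = 1, and for each s ∈ {0,1} let P_s be a probability distribution on X × Y with marginal Q_s(x) = ∑_y P_s(x, y). Identify a pair of Markov kernels (K₀, K₁) from X to X with a point of ℝ^{2|X|²}, define P̃_s(x̃, y) = ∑_x K_s(x̃ | x)·P_s(x, y) and Q̃_s(x̃) = ∑_x K_s(x̃ | x)·Q_s(x), and for ρ ≥ 0 let S_ρ ⊆ ℝ^{2|X|²} denote the set of minimizers of π₀·d_TV(P̃₀, P₀) + π₁·d_TV(P̃₁, P₁) over all pairs of Markov kernels satisfying d_TV(Q̃₁, Q̃₀) ≤ ρ. Then the Hausdorff distance between S_ρ and S_0 tends to 0 as ρ → 0⁺. -/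

import Mathlib

/-- A probability distribution on a finite type: nonnegative and sums to one. -/
def IsProbDist {Z : Type*} [Fintype Z] (p : Z → ℝ) : Prop :=
  (∀ z, 0 ≤ p z) ∧ ∑ z, p z = 1

/-- Total variation distance between two distributions on a finite type. -/
noncomputable def dTV {Z : Type*} [Fintype Z] (p q : Z → ℝ) : ℝ :=
  (1 / 2) * ∑ z, |p z - q z|

/-- A Markov kernel from `X` to `X`: `K x' x` is the probability of moving to `x'`
from `x`, so each column `K · x` is a probability distribution. -/
def IsMarkovKernel {X : Type*} [Fintype X] (K : X → X → ℝ) : Prop :=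
  ∀ x, IsProbDist (fun x' => K x' x)

/-- Repaired joint distribution `P̃` obtained from `P` by the kernel `K` acting on
the `X`-component. -/
noncomputable def repairJoint {X Y : Type*} [Fintype X] [Fintype Y]
    (K : X → X → ℝ) (P : X × Y → ℝ) : X × Y → ℝ :=
  fun p => ∑ x : X, K p.1 x * P (x, p.2)

/-- Pushforward of a distribution on `X` through the kernel `K`. -/
noncomputable def pushforward {X : Type*} [Fintype X] (K : X → X → ℝ) (q : X → ℝ) :
    X → ℝ := fun x' => ∑ x, K x' x * q x



open Finset

noncomputable section AuxDev

/-- interpolation value at first coordinate `ρ` along the segment between planar points -/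
noncomputable def interpVal (a b : ℝ × ℝ) (ρ : ℝ) : ℝ :=
  if a.1 < b.1 then ((b.1 - ρ) * a.2 + (ρ - a.1) * b.2) / (b.1 - a.1) else min a.2 b.2

lemma prodsum {ι : Type*} (L U : Finset ι) (F G : ι → ℝ) :
    ∑ p ∈ L ×ˢ U, F p.1 * G p.2 = (∑ i ∈ L, F i) * (∑ j ∈ U, G j) := by
  rw [Finset.sum_mul_sum, Finset.sum_product]

lemma pair_bound {ι : Type*} (s : Finset ι) (wt : ι → ℝ)
    (hw : ∀ i ∈ s, 0 ≤ wt i) (h1 : ∑ i ∈ s, wt i = 1)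
    (q : ι → ℝ × ℝ) (ρ T : ℝ)
    (hρ : ∑ i ∈ s, wt i * (q i).1 = ρ)
    (hT : ∑ i ∈ s, wt i * (q i).2 = T) :
    ∃ i ∈ s, ∃ j ∈ s, (q i).1 ≤ ρ ∧ ρ ≤ (q j).1 ∧ interpVal (q i) (q j) ρ ≤ T := by
  classical
  set L := s.filter (fun i => (q i).1 ≤ ρ) with hLdef
  set U := s.filter (fun i => ¬ (q i).1 ≤ ρ) with hUdef
  have hLs : ∀ i ∈ L, i ∈ s := fun i hi => (Finset.mem_filter.1 hi).1
  have hUs : ∀ i ∈ U, i ∈ s := fun i hi => (Finset.mem_filter.1 hi).1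
  have hLle : ∀ i ∈ L, (q i).1 ≤ ρ := fun i hi => (Finset.mem_filter.1 hi).2
  have hUlt : ∀ i ∈ U, ρ < (q i).1 := fun i hi => not_le.1 (Finset.mem_filter.1 hi).2
  have hwL : ∀ i ∈ L, 0 ≤ wt i := fun i hi => hw i (hLs i hi)
  have hwU : ∀ i ∈ U, 0 ≤ wt i := fun i hi => hw i (hUs i hi)
  have hsplit0 : (∑ i ∈ L, wt i) + (∑ i ∈ U, wt i) = 1 := by
    rw [hLdef, hUdef, Finset.sum_filter_add_sum_filter_not]; exact h1
  have hsplit1 : (∑ i ∈ L, wt i * (q i).1) + (∑ i ∈ U, wt i * (q i).1) = ρ := by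
    rw [hLdef, hUdef, Finset.sum_filter_add_sum_filter_not]; exact hρ
  have hsplit2 : (∑ i ∈ L, wt i * (q i).2) + (∑ i ∈ U, wt i * (q i).2) = T := by
    rw [hLdef, hUdef, Finset.sum_filter_add_sum_filter_not]; exact hT
  set l0 := ∑ i ∈ L, wt i with hl0def
  set u0 := ∑ i ∈ U, wt i with hu0def
  set l1 := ∑ i ∈ L, wt i * (q i).1 with hl1def
  set u1 := ∑ i ∈ U, wt i * (q i).1 with hu1def
  set l2 := ∑ i ∈ L, wt i * (q i).2 with hl2def
  set u2 := ∑ i ∈ U, wt i * (q i).2 with hu2def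
  have hl0nn : 0 ≤ l0 := Finset.sum_nonneg hwL
  have hu0nn : 0 ≤ u0 := Finset.sum_nonneg hwU
  by_cases hu0 : u0 = 0
  · -- all mass on L
    have hUzero : ∀ i ∈ U, wt i = 0 := (Finset.sum_eq_zero_iff_of_nonneg hwU).1 hu0
    have hl0one : l0 = 1 := by rw [hu0] at hsplit0; linarith
    have hu1z : u1 = 0 := Finset.sum_eq_zero fun i hi => by rw [hUzero i hi, zero_mul]
    have hu2z : u2 = 0 := Finset.sum_eq_zero fun i hi => by rw [hUzero i hi, zero_mul]
    have hl1ρ : l1 = ρ := by rw [hu1z] at hsplit1; linarith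
    have hl2T : l2 = T := by rw [hu2z] at hsplit2; linarith
    -- every L-support point has first coordinate ρ
    have hz : ∑ i ∈ L, wt i * (ρ - (q i).1) = 0 := by
      have : ∑ i ∈ L, wt i * (ρ - (q i).1)
          = (∑ i ∈ L, wt i * ρ) - ∑ i ∈ L, wt i * (q i).1 := by
        rw [← Finset.sum_sub_distrib]; exact Finset.sum_congr rfl fun i _ => by ring
      rw [this, ← Finset.sum_mul, ← hl0def, hl0one, ← hl1def, hl1ρ]; ring
    have hfst : ∀ i ∈ L, wt i ≠ 0 → (q i).1 = ρ := by
      intro i hi hne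
      have := (Finset.sum_eq_zero_iff_of_nonneg
        (fun j hj => mul_nonneg (hwL j hj) (by linarith [hLle j hj]))).1 hz i hi
      rcases mul_eq_zero.1 this with h | h
      · exact absurd h hne
      · linarith [hLle i hi]
    -- support
    have hLsupp : (L.filter (fun i => wt i ≠ 0)).Nonempty := by
      obtain ⟨i0, hi0s, hi0⟩ := Finset.exists_ne_zero_of_sum_ne_zero
        (h1 ▸ (one_ne_zero : (1:ℝ) ≠ 0))
      have hi0L : i0 ∈ L := by
        by_cases h : (q i0).1 ≤ ρ
        · exact Finset.mem_filter.2 ⟨hi0s, h⟩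
        · exact absurd (hUzero i0 (Finset.mem_filter.2 ⟨hi0s, h⟩)) hi0
      exact ⟨i0, Finset.mem_filter.2 ⟨hi0L, hi0⟩⟩
    obtain ⟨i1, hi1, hmin⟩ := (L.filter (fun i => wt i ≠ 0)).exists_min_image
      (fun i => (q i).2) hLsupp
    have hi1L : i1 ∈ L := (Finset.mem_filter.1 hi1).1
    have hi1w : wt i1 ≠ 0 := (Finset.mem_filter.1 hi1).2
    have hsum_eq : ∑ i ∈ L.filter (fun i => wt i ≠ 0), wt i * (q i).2 = T := by
      rw [← hl2T, hl2def]
      refine Finset.sum_filter_of_ne fun i hi h => ?_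
      intro hw0; rw [hw0, zero_mul] at h; exact h rfl
    have hsum_w : ∑ i ∈ L.filter (fun i => wt i ≠ 0), wt i = 1 := by
      rw [← hl0one, hl0def]
      exact Finset.sum_filter_of_ne fun i hi h => h
    have hTlb : (q i1).2 ≤ T := by
      have : ∑ i ∈ L.filter (fun i => wt i ≠ 0), wt i * (q i1).2
          ≤ ∑ i ∈ L.filter (fun i => wt i ≠ 0), wt i * (q i).2 := by
        refine Finset.sum_le_sum fun i hi => ?_
        exact mul_le_mul_of_nonneg_left (hmin i hi) (hwL i (Finset.mem_filter.1 hi).1)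
      rw [← Finset.sum_mul, hsum_w, one_mul] at this
      rw [hsum_eq] at this; exact this
    refine ⟨i1, hLs i1 hi1L, i1, hLs i1 hi1L, hLle i1 hi1L, ?_, ?_⟩
    · exact le_of_eq (hfst i1 hi1L hi1w).symm
    · rw [interpVal, if_neg (lt_irrefl _), min_self]; exact hTlb
  · -- both sides carry mass
    have hu0pos : 0 < u0 := lt_of_le_of_ne hu0nn (Ne.symm hu0)
    have hUsupp : ∃ j0 ∈ U, 0 < wt j0 := by
      obtain ⟨j0, hj0U, hj0⟩ := Finset.exists_ne_zero_of_sum_ne_zero hu0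
      exact ⟨j0, hj0U, lt_of_le_of_ne (hwU j0 hj0U) (Ne.symm hj0)⟩
    obtain ⟨j0, hj0U, hj0pos⟩ := hUsupp
    have hu1gt : ρ * u0 < u1 := by
      have : ∑ j ∈ U, wt j * ρ < ∑ j ∈ U, wt j * (q j).1 := by
        refine Finset.sum_lt_sum (fun j hj => mul_le_mul_of_nonneg_left
          (le_of_lt (hUlt j hj)) (hwU j hj)) ⟨j0, hj0U, ?_⟩
        exact mul_lt_mul_of_pos_left (hUlt j0 hj0U) hj0pos
      rw [← Finset.sum_mul] at this
      calc ρ * u0 = u0 * ρ := by ring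
        _ < u1 := this
    have hl0pos : 0 < l0 := by
      rcases lt_or_eq_of_le hl0nn with h | h
      · exact h
      · exfalso
        have hLzero : ∀ i ∈ L, wt i = 0 :=
          (Finset.sum_eq_zero_iff_of_nonneg hwL).1 h.symm
        have hl1z : l1 = 0 := Finset.sum_eq_zero fun i hi => by rw [hLzero i hi, zero_mul]
        have hu0one : u0 = 1 := by rw [← h] at hsplit0; linarith
        rw [hu0one, mul_one] at hu1gt
        rw [hl1z] at hsplit1
        linarith
    obtain ⟨i0, hi0L, hi0pos⟩ : ∃ i0 ∈ L, 0 < wt i0 := by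
      obtain ⟨i0, hi0L, hi0⟩ := Finset.exists_ne_zero_of_sum_ne_zero (ne_of_gt hl0pos)
      exact ⟨i0, hi0L, lt_of_le_of_ne (hwL i0 hi0L) (Ne.symm hi0)⟩
    by_contra hcon
    push_neg at hcon
    have hpt : ∀ i ∈ L, ∀ j ∈ U,
        T * ((q j).1 - (q i).1) < ((q j).1 - ρ) * (q i).2 + (ρ - (q i).1) * (q j).2 := by
      intro i hi j hj
      have hD : 0 < (q j).1 - (q i).1 := by linarith [hLle i hi, hUlt j hj]
      have := hcon i (hLs i hi) j (hUs j hj) (hLle i hi) (le_of_lt (hUlt j hj))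
      rw [interpVal, if_pos (by linarith [hLle i hi, hUlt j hj])] at this
      exact (lt_div_iff₀ hD).1 this
    have hsum : ∑ p ∈ L ×ˢ U, (wt p.1 * wt p.2) * (T * ((q p.2).1 - (q p.1).1))
        < ∑ p ∈ L ×ˢ U, (wt p.1 * wt p.2) *
            (((q p.2).1 - ρ) * (q p.1).2 + (ρ - (q p.1).1) * (q p.2).2) := by
      refine Finset.sum_lt_sum (fun p hp => ?_) ⟨(i0, j0), Finset.mem_product.2 ⟨hi0L, hj0U⟩, ?_⟩
      · rcases Finset.mem_product.1 hp with ⟨hp1, hp2⟩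
        exact mul_le_mul_of_nonneg_left (le_of_lt (hpt _ hp1 _ hp2))
          (mul_nonneg (hwL _ hp1) (hwU _ hp2))
      · exact mul_lt_mul_of_pos_left (hpt _ hi0L _ hj0U) (mul_pos hi0pos hj0pos)
    have hA : ∑ p ∈ L ×ˢ U, (wt p.1 * wt p.2) * (T * ((q p.2).1 - (q p.1).1))
        = T * (l0 * u1) - T * (l1 * u0) := by
      rw [Finset.sum_product]
      have inner : ∀ i ∈ L, ∑ j ∈ U, (wt i * wt j) * (T * ((q j).1 - (q i).1))
          = wt i * (T * u1) - (wt i * (q i).1) * (T * u0) := by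
        intro i _
        calc ∑ j ∈ U, (wt i * wt j) * (T * ((q j).1 - (q i).1))
            = ∑ j ∈ U, ((wt i * T) * (wt j * (q j).1) - (wt i * T * (q i).1) * wt j) :=
              Finset.sum_congr rfl fun j _ => by ring
          _ = (wt i * T) * (∑ j ∈ U, wt j * (q j).1) - (wt i * T * (q i).1) * ∑ j ∈ U, wt j := by
              rw [Finset.sum_sub_distrib, ← Finset.mul_sum, ← Finset.mul_sum]
          _ = wt i * (T * u1) - (wt i * (q i).1) * (T * u0) := by
              rw [← hu1def, ← hu0def]; ring
      calc ∑ i ∈ L, ∑ j ∈ U, (wt i * wt j) * (T * ((q j).1 - (q i).1))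
          = ∑ i ∈ L, (wt i * (T * u1) - (wt i * (q i).1) * (T * u0)) :=
            Finset.sum_congr rfl inner
        _ = (∑ i ∈ L, wt i) * (T * u1) - (∑ i ∈ L, wt i * (q i).1) * (T * u0) := by
            rw [Finset.sum_sub_distrib, ← Finset.sum_mul, ← Finset.sum_mul]
        _ = T * (l0 * u1) - T * (l1 * u0) := by rw [← hl0def, ← hl1def]; ring
    have hB : ∑ p ∈ L ×ˢ U, (wt p.1 * wt p.2) *
          (((q p.2).1 - ρ) * (q p.1).2 + (ρ - (q p.1).1) * (q p.2).2)
        = l2 * (u1 - ρ * u0) + (ρ * l0 - l1) * u2 := by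
      rw [Finset.sum_product]
      have inner : ∀ i ∈ L, ∑ j ∈ U, (wt i * wt j) *
            (((q j).1 - ρ) * (q i).2 + (ρ - (q i).1) * (q j).2)
          = (wt i * (q i).2) * (u1 - ρ * u0) + (wt i * ρ - wt i * (q i).1) * u2 := by
        intro i _
        calc ∑ j ∈ U, (wt i * wt j) * (((q j).1 - ρ) * (q i).2 + (ρ - (q i).1) * (q j).2)
            = ∑ j ∈ U, ((wt i * (q i).2) * (wt j * (q j).1)
                - (wt i * (q i).2 * ρ) * wt j
                + (wt i * ρ - wt i * (q i).1) * (wt j * (q j).2)) :=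
              Finset.sum_congr rfl fun j _ => by ring
          _ = (wt i * (q i).2) * (∑ j ∈ U, wt j * (q j).1)
                - (wt i * (q i).2 * ρ) * (∑ j ∈ U, wt j)
                + (wt i * ρ - wt i * (q i).1) * (∑ j ∈ U, wt j * (q j).2) := by
              rw [Finset.sum_add_distrib, Finset.sum_sub_distrib,
                ← Finset.mul_sum, ← Finset.mul_sum, ← Finset.mul_sum]
          _ = (wt i * (q i).2) * (u1 - ρ * u0) + (wt i * ρ - wt i * (q i).1) * u2 := by
              rw [← hu1def, ← hu0def, ← hu2def]; ring
      calc ∑ i ∈ L, ∑ j ∈ U, (wt i * wt j) * (((q j).1 - ρ) * (q i).2 + (ρ - (q i).1) * (q j).2)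
          = ∑ i ∈ L, ((wt i * (q i).2) * (u1 - ρ * u0) + (wt i * ρ - wt i * (q i).1) * u2) :=
            Finset.sum_congr rfl inner
        _ = (∑ i ∈ L, wt i * (q i).2) * (u1 - ρ * u0)
            + (∑ i ∈ L, (wt i * ρ - wt i * (q i).1)) * u2 := by
            rw [Finset.sum_add_distrib, ← Finset.sum_mul, ← Finset.sum_mul]
        _ = l2 * (u1 - ρ * u0) + (ρ * l0 - l1) * u2 := by
            rw [Finset.sum_sub_distrib, ← hl1def, ← hl2def]
            have : ∑ i ∈ L, wt i * ρ = ρ * l0 := by rw [← Finset.sum_mul, ← hl0def]; ring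
            rw [this]
    rw [hA, hB] at hsum
    have heq : l2 * (u1 - ρ * u0) + (ρ * l0 - l1) * u2 = T * (l0 * u1) - T * (l1 * u0) := by
      have h1 : u1 = ρ - l1 := by linarith
      have h2 : u0 = 1 - l0 := by linarith
      have h3 : u2 = T - l2 := by linarith
      rw [h1, h2, h3]; ring
    linarith


lemma pair_point {W : Type*} [AddCommGroup W] [Module ℝ W] {P : Set W} (hconv : Convex ℝ P)
    (u w : W → ℝ) (hu : IsLinearMap ℝ u) (hw : IsLinearMap ℝ w)
    {a b : W} (ha : a ∈ P) (hb : b ∈ P) {ρ : ℝ} (h1 : u a ≤ ρ) (h2 : ρ ≤ u b) :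
    ∃ y ∈ P, u y = ρ ∧ w y = interpVal (u a, w a) (u b, w b) ρ := by
  rcases lt_or_ge (u a) (u b) with hlt | hge
  · set θ : ℝ := (u b - ρ) / (u b - u a) with hθ
    have hD : 0 < u b - u a := by linarith
    have hθ0 : 0 ≤ θ := div_nonneg (by linarith) (le_of_lt hD)
    have hθ1 : θ ≤ 1 := by rw [hθ, div_le_one hD]; linarith
    refine ⟨θ • a + (1 - θ) • b, hconv ha hb hθ0 (by linarith) (by ring), ?_, ?_⟩
    · rw [hu.map_add, hu.map_smul, hu.map_smul, smul_eq_mul, smul_eq_mul, hθ]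
      field_simp
      ring
    · rw [hw.map_add, hw.map_smul, hw.map_smul, smul_eq_mul, smul_eq_mul, interpVal,
        if_pos (by exact hlt)]
      simp only
      rw [hθ]
      field_simp
      try ring
  · have hua : u a = ρ := le_antisymm h1 (le_trans h2 hge)
    have hub : u b = ρ := le_antisymm (le_trans hge h1) h2
    by_cases hab : w a ≤ w b
    · refine ⟨a, ha, hua, ?_⟩
      rw [interpVal, if_neg (not_lt.2 hge)]
      simp only
      rw [min_eq_left hab]
    · refine ⟨b, hb, hub, ?_⟩
      rw [interpVal, if_neg (not_lt.2 hge)]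
      simp only
      rw [min_eq_right (le_of_not_ge hab)]

lemma finite_min_eventually_affine {ι : Type*} (F : Finset ι) (hF : F.Nonempty)
    (α β : ι → ℝ) :
    ∃ ρ1 > 0, ∃ i0 ∈ F, ∀ ρ ∈ Set.Icc (0:ℝ) ρ1,
      F.inf' hF (fun i => α i + β i * ρ) = α i0 + β i0 * ρ := by
  classical
  obtain ⟨ia, hia, hiaval⟩ := F.exists_mem_eq_inf' hF α
  set m := F.inf' hF α with hm
  set F' := F.filter (fun i => α i = m) with hF'
  have hF'ne : F'.Nonempty := ⟨ia, Finset.mem_filter.2 ⟨hia, hiaval.symm⟩⟩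
  obtain ⟨i0, hi0F', hi0min⟩ := F'.exists_min_image β hF'ne
  have hi0F : i0 ∈ F := (Finset.mem_filter.1 hi0F').1
  have hαi0 : α i0 = m := (Finset.mem_filter.1 hi0F').2
  have hmle : ∀ i ∈ F, m ≤ α i := fun i hi => Finset.inf'_le α hi
  set δ : ι → ℝ := fun i => if α i = m then 1 else (α i - m) / (|β i0 - β i| + 1) with hδ
  have hδpos : ∀ i ∈ F, 0 < δ i := by
    intro i hi
    rw [hδ]; dsimp only
    split_ifs with h
    · exact one_pos
    · have : m < α i := lt_of_le_of_ne (hmle i hi) (Ne.symm h)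
      apply div_pos (by linarith)
      positivity
  set ρ1 := F.inf' hF δ with hρ1
  have hρ1pos : 0 < ρ1 := (Finset.lt_inf'_iff hF).2 hδpos
  refine ⟨ρ1, hρ1pos, i0, hi0F, ?_⟩
  rintro ρ ⟨hρ0, hρρ1⟩
  apply le_antisymm
  · exact Finset.inf'_le _ hi0F
  · refine Finset.le_inf' _ _ fun i hi => ?_
    by_cases h : α i = m
    · have hβ : β i0 ≤ β i := hi0min i (Finset.mem_filter.2 ⟨hi, h⟩)
      rw [hαi0, h]
      have := mul_le_mul_of_nonneg_right hβ hρ0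
      linarith
    · have hδi : ρ1 ≤ (α i - m) / (|β i0 - β i| + 1) := by
        have h2 := Finset.inf'_le δ hi
        rw [hδ] at h2; dsimp only at h2; rw [if_neg h] at h2
        linarith
      have hραbound : ρ ≤ (α i - m) / (|β i0 - β i| + 1) := le_trans hρρ1 hδi
      have hmlt : m < α i := lt_of_le_of_ne (hmle i hi) (Ne.symm h)
      have habs : (β i0 - β i) * ρ ≤ α i - m := by
        calc (β i0 - β i) * ρ ≤ |β i0 - β i| * ρ :=
              mul_le_mul_of_nonneg_right (le_abs_self _) hρ0
          _ ≤ (|β i0 - β i| + 1) * ((α i - m) / (|β i0 - β i| + 1)) := by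
              apply mul_le_mul (by linarith) hραbound hρ0 (by positivity)
          _ = α i - m := by field_simp
      rw [hαi0]
      nlinarith [habs]

lemma polytope_extremePoints_finite {W : Type*} [AddCommGroup W] [Module ℝ W]
    {ι : Type*} [Finite ι] (ℓ : ι → W → ℝ) (hlin : ∀ i, IsLinearMap ℝ (ℓ i)) (c : ι → ℝ) :
    (Set.extremePoints ℝ {y : W | ∀ i, ℓ i y ≤ c i}).Finite := by
  classical
  cases nonempty_fintype ι
  set P := {y : W | ∀ i, ℓ i y ≤ c i} with hP
  have hkey : ∀ x ∈ Set.extremePoints ℝ P, ∀ d : W,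
      (∀ i, ℓ i x = c i → ℓ i d = 0) → d = 0 := by
    intro x hx d hd
    by_contra hdne
    obtain ⟨hxP, hxext⟩ := hx
    set N := (Finset.univ : Finset ι).filter (fun i => ℓ i x ≠ c i) with hN
    set ε : ℝ := if hNe : N.Nonempty then
        N.inf' hNe (fun i => (c i - ℓ i x) / (|ℓ i d| + 1)) else 1 with hε
    have hεpos : 0 < ε := by
      rw [hε]
      split_ifs with hNe
      · refine (Finset.lt_inf'_iff hNe).2 fun i hi => ?_
        have hne : ℓ i x ≠ c i := (Finset.mem_filter.1 hi).2
        have hlt : ℓ i x < c i := lt_of_le_of_ne (hxP i) hne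
        apply div_pos (by linarith)
        positivity
      · exact one_pos
    have hεle : ∀ i, ℓ i x ≠ c i → ε * (|ℓ i d| + 1) ≤ c i - ℓ i x := by
      intro i hi
      have hmemN : i ∈ N := Finset.mem_filter.2 ⟨Finset.mem_univ i, hi⟩
      have h1 : ε ≤ (c i - ℓ i x) / (|ℓ i d| + 1) := by
        rw [hε, dif_pos ⟨i, hmemN⟩]
        exact Finset.inf'_le _ hmemN
      calc ε * (|ℓ i d| + 1) ≤ ((c i - ℓ i x) / (|ℓ i d| + 1)) * (|ℓ i d| + 1) :=
            mul_le_mul_of_nonneg_right h1 (by positivity)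
        _ = c i - ℓ i x := by field_simp
    have hmem : ∀ σ : ℝ, |σ| ≤ 1 → x + (σ * ε) • d ∈ P := by
      intro σ hσ i
      show ℓ i (x + (σ * ε) • d) ≤ c i
      rw [(hlin i).map_add, (hlin i).map_smul, smul_eq_mul]
      by_cases h : ℓ i x = c i
      · rw [hd i h, mul_zero, add_zero, h]
      · have hb := hεle i h
        have habs : |σ * ε * ℓ i d| ≤ ε * (|ℓ i d| + 1) := by
          rw [abs_mul, abs_mul, abs_of_pos hεpos]
          calc |σ| * ε * |ℓ i d| ≤ 1 * ε * |ℓ i d| :=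
                mul_le_mul_of_nonneg_right (mul_le_mul_of_nonneg_right hσ hεpos.le)
                  (abs_nonneg _)
            _ ≤ ε * (|ℓ i d| + 1) := by nlinarith [abs_nonneg (ℓ i d), hεpos]
        linarith [le_abs_self (σ * ε * ℓ i d)]
    have hy1 : x - ε • d ∈ P := by
      have := hmem (-1) (by norm_num)
      rw [show ((-1 : ℝ) * ε) • d = -(ε • d) by rw [neg_one_mul, neg_smul]] at this
      rw [sub_eq_add_neg]
      exact this
    have hy2 : x + ε • d ∈ P := by
      have := hmem 1 (by norm_num)
      rwa [one_mul] at this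
    have hseg : x ∈ openSegment ℝ (x - ε • d) (x + ε • d) := by
      refine ⟨1/2, 1/2, by norm_num, by norm_num, by norm_num, ?_⟩
      rw [smul_sub, smul_add]
      rw [show (1/2 : ℝ) • x - (1/2 : ℝ) • ε • d + ((1/2 : ℝ) • x + (1/2 : ℝ) • ε • d)
          = ((1/2 : ℝ) + (1/2 : ℝ)) • x by rw [add_smul]; abel]
      norm_num
    have h1 := hxext hy1 hy2 hseg
    have hz : ε • d = 0 := by
      have := sub_eq_self.1 h1
      exact this
    rcases smul_eq_zero.1 hz with h | h
    · exact absurd h hεpos.ne'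
    · exact hdne h
  have hinj : Set.InjOn (fun x => (Finset.univ : Finset ι).filter (fun i => ℓ i x = c i))
      (Set.extremePoints ℝ P) := by
    intro x hx y hy hxy
    dsimp only at hxy
    have hzero : ∀ i, ℓ i x = c i → ℓ i (y - x) = 0 := by
      intro i hi
      have hix : i ∈ Finset.univ.filter (fun j => ℓ j x = c j) :=
        Finset.mem_filter.2 ⟨Finset.mem_univ _, hi⟩
      have hiy : ℓ i y = c i := by
        have := hix
        rw [hxy] at this
        exact (Finset.mem_filter.1 this).2
      rw [(hlin i).map_sub, hi, hiy, sub_self]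
    have := hkey x hx (y - x) hzero
    have := sub_eq_zero.1 this
    exact this.symm
  exact Set.Finite.of_finite_image (Set.Finite.subset (Set.finite_univ) (Set.subset_univ _)) hinj

lemma polytope_convex {W : Type*} [AddCommGroup W] [Module ℝ W]
    {ι : Type*} (ℓ : ι → W → ℝ) (hlin : ∀ i, IsLinearMap ℝ (ℓ i)) (c : ι → ℝ) :
    Convex ℝ {y : W | ∀ i, ℓ i y ≤ c i} := by
  intro x hx y hy a b ha hb hab
  intro i
  show ℓ i (a • x + b • y) ≤ c i
  rw [(hlin i).map_add, (hlin i).map_smul, (hlin i).map_smul, smul_eq_mul, smul_eq_mul]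
  calc a * ℓ i x + b * ℓ i y ≤ a * c i + b * c i :=
        add_le_add (mul_le_mul_of_nonneg_left (hx i) ha) (mul_le_mul_of_nonneg_left (hy i) hb)
    _ = c i := by rw [← add_mul, hab, one_mul]

lemma polytope_eq_convexHull {W : Type*} [NormedAddCommGroup W] [NormedSpace ℝ W]
    {ι : Type*} [Finite ι] (ℓ : ι → W → ℝ) (hlin : ∀ i, IsLinearMap ℝ (ℓ i)) (c : ι → ℝ)
    (hcpt : IsCompact {y : W | ∀ i, ℓ i y ≤ c i}) :
    {y : W | ∀ i, ℓ i y ≤ c i}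
      = convexHull ℝ (Set.extremePoints ℝ {y : W | ∀ i, ℓ i y ≤ c i}) := by
  have hKM := closure_convexHull_extremePoints hcpt (polytope_convex ℓ hlin c)
  rw [((polytope_extremePoints_finite ℓ hlin c).isClosed_convexHull ℝ).closure_eq] at hKM
  exact hKM.symm


def sg (b : Bool) : ℝ := if b then 1 else -1

lemma sg_mul_le_abs (b : Bool) (v : ℝ) : sg b * v ≤ |v| := by
  cases b
  · have : sg false * v = -v := by simp [sg]
    rw [this]
    exact neg_le_abs v
  · have : sg true * v = v := by simp [sg]
    rw [this]
    exact le_abs_self v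

lemma abs_sum_le_iff' {ι : Type*} [Fintype ι] (a : ι → ℝ) (t : ℝ) :
    (∑ i, |a i|) ≤ t ↔ ∀ s : ι → Bool, (∑ i, sg (s i) * a i) ≤ t := by
  constructor
  · intro h s
    exact le_trans (Finset.sum_le_sum fun i _ => sg_mul_le_abs _ _) h
  · intro h
    calc ∑ i, |a i| = ∑ i, sg (decide (0 ≤ a i)) * a i := Finset.sum_congr rfl fun i _ => by
          by_cases hb : 0 ≤ a i
          · simp [sg, hb, abs_of_nonneg hb]
          · simp [sg, hb, abs_of_neg (not_le.1 hb)]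
      _ ≤ t := h _

lemma abs_aff_sum_convex {W : Type*} [AddCommGroup W] [Module ℝ W]
    {ι : Type*} [Fintype ι] (A : ι → W → ℝ) (hA : ∀ i, IsLinearMap ℝ (A i))
    (c : ι → ℝ) (x y : W) (a b : ℝ) (ha : 0 ≤ a) (hb : 0 ≤ b) (hab : a + b = 1) :
    (∑ i, |A i (a • x + b • y) + c i|)
      ≤ a * (∑ i, |A i x + c i|) + b * (∑ i, |A i y + c i|) := by
  rw [Finset.mul_sum, Finset.mul_sum, ← Finset.sum_add_distrib]
  refine Finset.sum_le_sum fun i _ => ?_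
  rw [(hA i).map_add, (hA i).map_smul, (hA i).map_smul, smul_eq_mul, smul_eq_mul]
  have hc : a * c i + b * c i = c i := by rw [← add_mul, hab, one_mul]
  calc |a * A i x + b * A i y + c i|
      = |a * (A i x + c i) + b * (A i y + c i)| := by
        congr 1
        linear_combination (-(c i)) * hab
    _ ≤ |a * (A i x + c i)| + |b * (A i y + c i)| := abs_add_le _ _
    _ = a * |A i x + c i| + b * |A i y + c i| := by
        rw [abs_mul, abs_mul, abs_of_nonneg ha, abs_of_nonneg hb]

lemma lin_continuous {W : Type*} [NormedAddCommGroup W] [NormedSpace ℝ W]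
    [FiniteDimensional ℝ W] {h : W → ℝ} (hh : IsLinearMap ℝ h) : Continuous h :=
  (hh.mk' h).continuous_of_finiteDimensional


theorem key_prop
    {W : Type*} [NormedAddCommGroup W] [NormedSpace ℝ W] [FiniteDimensional ℝ W]
    {ιM ιf ιg : Type*} [Fintype ιM] [Fintype ιf] [Fintype ιg]
    (mA : ιM → W → ℝ) (hmA : ∀ k, IsLinearMap ℝ (mA k)) (mb : ιM → ℝ)
    (Af : ιf → W → ℝ) (hAf : ∀ i, IsLinearMap ℝ (Af i)) (cf : ιf → ℝ)
    (Ag : ιg → W → ℝ) (hAg : ∀ i, IsLinearMap ℝ (Ag i)) (cg : ιg → ℝ)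
    (M : Set W) (hM : M = {x | ∀ k, mA k x ≤ mb k}) (hMcpt : IsCompact M)
    (f g : W → ℝ)
    (hf : ∀ x, f x = ∑ i, |Af i x + cf i|)
    (hg : ∀ x, g x = ∑ i, |Ag i x + cg i|)
    (hfle : ∀ x ∈ M, f x ≤ 1) (hgle : ∀ x ∈ M, g x ≤ 1)
    (hg0 : ∃ x ∈ M, g x ≤ 0) :
    ∃ ρ2 > 0, ∃ A B : ℝ, ∀ ρ ∈ Set.Icc (0:ℝ) ρ2,
      IsLeast (f '' {x | x ∈ M ∧ g x ≤ ρ}) (A + B * ρ) := by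
  classical
  obtain ⟨x00, hx00M, hx00g⟩ := hg0
  -- linear coordinates on the lifted space
  set first : (W × ℝ × ℝ) →ₗ[ℝ] W := LinearMap.fst ℝ W (ℝ × ℝ) with hfirst
  set rco : (W × ℝ × ℝ) →ₗ[ℝ] ℝ :=
    (LinearMap.fst ℝ ℝ ℝ).comp (LinearMap.snd ℝ W (ℝ × ℝ)) with hrco
  set tco : (W × ℝ × ℝ) →ₗ[ℝ] ℝ :=
    (LinearMap.snd ℝ ℝ ℝ).comp (LinearMap.snd ℝ W (ℝ × ℝ)) with htco
  set L : (ιM ⊕ ((ιf → Bool) ⊕ ((ιg → Bool) ⊕ Bool))) → (W × ℝ × ℝ) →ₗ[ℝ] ℝ :=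
    Sum.elim (fun k => ((hmA k).mk' (mA k)).comp first)
      (Sum.elim (fun s => (∑ j, sg (s j) • ((hAf j).mk' (Af j))).comp first - tco)
        (Sum.elim (fun s => (∑ j, sg (s j) • ((hAg j).mk' (Ag j))).comp first - rco)
          (fun b => if b then rco else tco))) with hL
  set cP : (ιM ⊕ ((ιf → Bool) ⊕ ((ιg → Bool) ⊕ Bool))) → ℝ :=
    Sum.elim mb
      (Sum.elim (fun s => -(∑ j, sg (s j) * cf j))
        (Sum.elim (fun s => -(∑ j, sg (s j) * cg j)) (fun _ => 2))) with hcP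
  set P : Set (W × ℝ × ℝ) := {y | ∀ i, (L i) y ≤ cP i} with hPdef
  -- evaluation of constraints
  have hLM : ∀ k (y : W × ℝ × ℝ), L (Sum.inl k) y = mA k y.1 := by
    intro k y; simp [hL, hfirst]
  have hLf : ∀ s (y : W × ℝ × ℝ),
      L (Sum.inr (Sum.inl s)) y = (∑ j, sg (s j) * Af j y.1) - y.2.2 := by
    intro s y
    simp [hL, hfirst, htco, LinearMap.sum_apply, LinearMap.smul_apply, smul_eq_mul]
  have hLg : ∀ s (y : W × ℝ × ℝ),
      L (Sum.inr (Sum.inr (Sum.inl s))) y = (∑ j, sg (s j) * Ag j y.1) - y.2.1 := by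
    intro s y
    simp [hL, hfirst, hrco, LinearMap.sum_apply, LinearMap.smul_apply, smul_eq_mul]
  have hLb : ∀ b (y : W × ℝ × ℝ),
      L (Sum.inr (Sum.inr (Sum.inr b))) y = if b then y.2.1 else y.2.2 := by
    intro b y
    cases b <;> simp [hL, hrco, htco]
  -- description of P
  have hPdesc : ∀ y : W × ℝ × ℝ, y ∈ P ↔
      (y.1 ∈ M ∧ g y.1 ≤ y.2.1 ∧ f y.1 ≤ y.2.2 ∧ y.2.1 ≤ 2 ∧ y.2.2 ≤ 2) := by
    intro y
    constructor
    · intro h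
      refine ⟨?_, ?_, ?_, ?_, ?_⟩
      · rw [hM]
        intro k
        have := h (Sum.inl k)
        rwa [hLM] at this
      · rw [hg]
        rw [abs_sum_le_iff']
        intro s
        have := h (Sum.inr (Sum.inr (Sum.inl s)))
        rw [hLg] at this
        have hexp : ∑ j, sg (s j) * (Ag j y.1 + cg j)
            = (∑ j, sg (s j) * Ag j y.1) + ∑ j, sg (s j) * cg j := by
          rw [← Finset.sum_add_distrib]
          exact Finset.sum_congr rfl fun j _ => by ring
        rw [hexp]
        have hcPs : cP (Sum.inr (Sum.inr (Sum.inl s))) = -(∑ j, sg (s j) * cg j) := by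
          simp [hcP]
        rw [hcPs] at this
        linarith
      · rw [hf]
        rw [abs_sum_le_iff']
        intro s
        have := h (Sum.inr (Sum.inl s))
        rw [hLf] at this
        have hexp : ∑ j, sg (s j) * (Af j y.1 + cf j)
            = (∑ j, sg (s j) * Af j y.1) + ∑ j, sg (s j) * cf j := by
          rw [← Finset.sum_add_distrib]
          exact Finset.sum_congr rfl fun j _ => by ring
        rw [hexp]
        have hcPs : cP (Sum.inr (Sum.inl s)) = -(∑ j, sg (s j) * cf j) := by
          simp [hcP]
        rw [hcPs] at this
        linarith
      · have := h (Sum.inr (Sum.inr (Sum.inr true)))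
        rw [hLb] at this
        simpa [hcP] using this
      · have := h (Sum.inr (Sum.inr (Sum.inr false)))
        rw [hLb] at this
        simpa [hcP] using this
    · rintro ⟨h1, h2, h3, h4, h5⟩ i
      rcases i with k | s | s | b
      · rw [hLM]
        rw [hM] at h1
        exact h1 k
      · rw [hLf]
        rw [hf, abs_sum_le_iff'] at h3
        have := h3 s
        have hexp : ∑ j, sg (s j) * (Af j y.1 + cf j)
            = (∑ j, sg (s j) * Af j y.1) + ∑ j, sg (s j) * cf j := by
          rw [← Finset.sum_add_distrib]
          exact Finset.sum_congr rfl fun j _ => by ring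
        rw [hexp] at this
        have hcPs : cP (Sum.inr (Sum.inl s)) = -(∑ j, sg (s j) * cf j) := by simp [hcP]
        rw [hcPs]
        linarith
      · rw [hLg]
        rw [hg, abs_sum_le_iff'] at h2
        have := h2 s
        have hexp : ∑ j, sg (s j) * (Ag j y.1 + cg j)
            = (∑ j, sg (s j) * Ag j y.1) + ∑ j, sg (s j) * cg j := by
          rw [← Finset.sum_add_distrib]
          exact Finset.sum_congr rfl fun j _ => by ring
        rw [hexp] at this
        have hcPs : cP (Sum.inr (Sum.inr (Sum.inl s))) = -(∑ j, sg (s j) * cg j) := by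
          simp [hcP]
        rw [hcPs]
        linarith
      · rw [hLb]
        cases b
        · simpa [hcP] using h5
        · simpa [hcP] using h4
  -- basic facts
  have hgnn : ∀ x, 0 ≤ g x := fun x => by
    rw [hg]; exact Finset.sum_nonneg fun i _ => abs_nonneg _
  have hfnn : ∀ x, 0 ≤ f x := fun x => by
    rw [hf]; exact Finset.sum_nonneg fun i _ => abs_nonneg _
  have hPconvex : Convex ℝ P := by
    rw [hPdef]
    exact polytope_convex (fun i => ⇑(L i)) (fun i => (L i).isLinear) cP
  have hPclosed : IsClosed P := by
    have : P = ⋂ i, {y | L i y ≤ cP i} := by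
      rw [hPdef]; ext y; simp [Set.mem_iInter]
    rw [this]
    exact isClosed_iInter fun i =>
      isClosed_le (L i).continuous_of_finiteDimensional continuous_const
  have hPsub : P ⊆ M ×ˢ (Set.Icc (0:ℝ) 2 ×ˢ Set.Icc (0:ℝ) 2) := by
    intro y hy
    obtain ⟨h1, h2, h3, h4, h5⟩ := (hPdesc y).1 hy
    exact ⟨h1, ⟨le_trans (hgnn y.1) h2, h4⟩, ⟨le_trans (hfnn y.1) h3, h5⟩⟩
  have hPcpt : IsCompact P :=
    IsCompact.of_isClosed_subset (hMcpt.prod (isCompact_Icc.prod isCompact_Icc))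
      hPclosed hPsub
  have hEfin : (Set.extremePoints ℝ P).Finite := by
    rw [hPdef]
    exact polytope_extremePoints_finite (fun i => ⇑(L i)) (fun i => (L i).isLinear) cP
  have hhull : P = convexHull ℝ (Set.extremePoints ℝ P) := by
    rw [hPdef] at hPcpt ⊢
    exact polytope_eq_convexHull (fun i => ⇑(L i)) (fun i => (L i).isLinear) cP hPcpt
  set EF : Finset (W × ℝ × ℝ) := hEfin.toFinset with hEFdef
  set u : (W × ℝ × ℝ) → ℝ := fun y => y.2.1 with hu
  set w : (W × ℝ × ℝ) → ℝ := fun y => y.2.2 with hw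
  have hulin : IsLinearMap ℝ u := ⟨fun p q => rfl, fun c p => rfl⟩
  have hwlin : IsLinearMap ℝ w := ⟨fun p q => rfl, fun c p => rfl⟩
  have hEsubP : (EF : Set (W × ℝ × ℝ)) ⊆ P := by
    intro e he
    rw [hEFdef, Set.Finite.coe_toFinset] at he
    exact extremePoints_subset he
  -- weights representation
  have hrep : ∀ y ∈ P, ∃ wt : (W × ℝ × ℝ) → ℝ,
      (∀ e ∈ EF, 0 ≤ wt e) ∧ ∑ e ∈ EF, wt e = 1 ∧ ∑ e ∈ EF, wt e • e = y := by
    intro y hy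
    rw [hhull, ← hEfin.coe_toFinset, ← hEFdef, Finset.mem_convexHull'] at hy
    exact hy
  have hsum_u : ∀ (wt : (W × ℝ × ℝ) → ℝ) (y : W × ℝ × ℝ),
      ∑ e ∈ EF, wt e • e = y → ∑ e ∈ EF, wt e * u e = u y := by
    intro wt y hy
    have h1 : rco (∑ e ∈ EF, wt e • e) = rco y := by rw [hy]
    rw [map_sum] at h1
    have h2 : ∀ e, rco (wt e • e) = wt e * u e := by
      intro e
      rw [LinearMap.map_smul, smul_eq_mul]
      congr 1
    rw [Finset.sum_congr rfl fun e _ => h2 e] at h1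
    exact h1
  have hsum_w : ∀ (wt : (W × ℝ × ℝ) → ℝ) (y : W × ℝ × ℝ),
      ∑ e ∈ EF, wt e • e = y → ∑ e ∈ EF, wt e * w e = w y := by
    intro wt y hy
    have h1 : tco (∑ e ∈ EF, wt e • e) = tco y := by rw [hy]
    rw [map_sum] at h1
    have h2 : ∀ e, tco (wt e • e) = wt e * w e := by
      intro e
      rw [LinearMap.map_smul, smul_eq_mul]
      congr 1
    rw [Finset.sum_congr rfl fun e _ => h2 e] at h1
    exact h1
  -- Lemma A : lower bound via extreme pairs
  have lemA : ∀ ρ, 0 ≤ ρ → ρ ≤ 2 → ∀ x, x ∈ M → g x ≤ ρ →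
      ∃ e1 ∈ EF, ∃ e2 ∈ EF, u e1 ≤ ρ ∧ ρ ≤ u e2 ∧
        interpVal (u e1, w e1) (u e2, w e2) ρ ≤ f x := by
    intro ρ hρ0 hρ2 x hxM hxg
    have hyP : (x, ρ, f x) ∈ P := by
      rw [hPdesc]
      exact ⟨hxM, hxg, le_refl _, hρ2, le_trans (hfle x hxM) one_le_two⟩
    obtain ⟨wt, hwt0, hwt1, hwtsum⟩ := hrep _ hyP
    have h1 : ∑ e ∈ EF, wt e * u e = ρ := hsum_u wt _ hwtsum
    have h2 : ∑ e ∈ EF, wt e * w e = f x := hsum_w wt _ hwtsum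
    exact pair_bound EF wt hwt0 hwt1 (fun e => (u e, w e)) ρ (f x) h1 h2
  -- Lemma B : pairs give feasible points
  have lemB : ∀ ρ, 0 ≤ ρ → ρ ≤ 2 → ∀ e1 ∈ EF, ∀ e2 ∈ EF, u e1 ≤ ρ → ρ ≤ u e2 →
      ∃ x, (x ∈ M ∧ g x ≤ ρ) ∧ f x ≤ interpVal (u e1, w e1) (u e2, w e2) ρ := by
    intro ρ h0 h2' e1 he1 e2 he2 hu1 hu2
    obtain ⟨y, hyP, hyu, hyw⟩ :=
      pair_point hPconvex u w hulin hwlin (hEsubP he1) (hEsubP he2) hu1 hu2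
    obtain ⟨hyM, hyg, hyf, _, _⟩ := (hPdesc y).1 hyP
    refine ⟨y.1, ⟨hyM, ?_⟩, ?_⟩
    · exact le_trans hyg (le_of_eq hyu)
    · exact le_trans hyf (le_of_eq hyw)
  -- threshold ρ0
  set T0 : Finset ℝ := insert 2 ((EF.filter (fun e => 0 < u e)).image u) with hT0
  have hT0ne : T0.Nonempty := ⟨2, Finset.mem_insert_self _ _⟩
  set ρ0 := T0.min' hT0ne with hρ0def
  have hρ0pos : 0 < ρ0 := by
    rw [hρ0def]
    rw [show (0:ℝ) = 0 from rfl]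
    refine (Finset.lt_min'_iff T0 hT0ne).2 fun b hb => ?_
    rcases Finset.mem_insert.1 hb with rfl | hb
    · norm_num
    · obtain ⟨e, he, rfl⟩ := Finset.mem_image.1 hb
      exact (Finset.mem_filter.1 he).2
  have hρ0le2 : ρ0 ≤ 2 := Finset.min'_le _ _ (Finset.mem_insert_self _ _)
  have hρ0min : ∀ e ∈ EF, 0 < u e → ρ0 ≤ u e := fun e he hpos =>
    Finset.min'_le _ _ (Finset.mem_insert_of_mem
      (Finset.mem_image_of_mem u (Finset.mem_filter.2 ⟨he, hpos⟩)))
  have hnonpos : ∀ e ∈ EF, u e < ρ0 → u e ≤ 0 := by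
    intro e he h
    by_contra hpos
    exact absurd (hρ0min e he (not_le.1 hpos)) (not_le.2 h)
  -- an extreme point with u-value 2
  have heR : ∃ eR ∈ EF, u eR = 2 := by
    have hy00 : ((x00, 2, 2) : W × ℝ × ℝ) ∈ P := by
      rw [hPdesc]
      refine ⟨hx00M, ?_, ?_, le_refl _, le_refl _⟩
      · exact le_trans hx00g (by norm_num)
      · exact le_trans (hfle _ hx00M) one_le_two
    obtain ⟨wt, hwt0, hwt1, hwtsum⟩ := hrep _ hy00
    have h1 : ∑ e ∈ EF, wt e * u e = 2 := hsum_u wt _ hwtsum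
    have hube : ∀ e ∈ EF, u e ≤ 2 := fun e he => ((hPdesc e).1 (hEsubP he)).2.2.2.1
    have hz : ∑ e ∈ EF, wt e * (2 - u e) = 0 := by
      have hexp : ∑ e ∈ EF, wt e * (2 - u e)
          = (∑ e ∈ EF, wt e * 2) - ∑ e ∈ EF, wt e * u e := by
        rw [← Finset.sum_sub_distrib]
        exact Finset.sum_congr rfl fun e _ => by ring
      rw [hexp, ← Finset.sum_mul, hwt1, h1]
      ring
    obtain ⟨e0, he0, he0ne⟩ := Finset.exists_ne_zero_of_sum_ne_zero
      (hwt1 ▸ (one_ne_zero : (1:ℝ) ≠ 0))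
    have := (Finset.sum_eq_zero_iff_of_nonneg
      (fun e he => mul_nonneg (hwt0 e he) (by linarith [hube e he]))).1 hz e0 he0
    rcases mul_eq_zero.1 this with h | h
    · exact absurd h he0ne
    · exact ⟨e0, he0, by linarith⟩
  obtain ⟨eR, heREF, hueR⟩ := heR
  -- the pair family near 0
  set F0 : Finset ((W × ℝ × ℝ) × (W × ℝ × ℝ)) :=
    (EF ×ˢ EF).filter (fun p => u p.1 ≤ 0 ∧ ρ0 ≤ u p.2) with hF0def
  have hF0ne : F0.Nonempty := by
    obtain ⟨e1, he1, e2, he2, hv1, hv2, _⟩ :=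
      lemA 0 (le_refl 0) (by norm_num) x00 hx00M hx00g
    exact ⟨(e1, eR), Finset.mem_filter.2
      ⟨Finset.mem_product.2 ⟨he1, heREF⟩, hv1, by rw [hueR]; exact hρ0le2⟩⟩
  set αP : ((W × ℝ × ℝ) × (W × ℝ × ℝ)) → ℝ :=
    fun p => (u p.2 * w p.1 - u p.1 * w p.2) / (u p.2 - u p.1) with hαP
  set βP : ((W × ℝ × ℝ) × (W × ℝ × ℝ)) → ℝ :=
    fun p => (w p.2 - w p.1) / (u p.2 - u p.1) with hβP
  have hφ : ∀ p ∈ F0, ∀ ρ : ℝ,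
      interpVal (u p.1, w p.1) (u p.2, w p.2) ρ = αP p + βP p * ρ := by
    intro p hp ρ
    obtain ⟨h1, h2⟩ := (Finset.mem_filter.1 hp).2
    have hlt : u p.1 < u p.2 := lt_of_le_of_lt h1 (lt_of_lt_of_le hρ0pos h2)
    have hne : u p.2 - u p.1 ≠ 0 := sub_ne_zero.2 (ne_of_gt hlt)
    rw [interpVal, if_pos hlt, hαP, hβP]
    simp only
    field_simp
    ring
  -- the value function equals the F0-min of affine functions on [0, ρ0/2]
  have hKey0 : ∀ ρ ∈ Set.Icc (0:ℝ) (ρ0/2),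
      IsLeast (f '' {x | x ∈ M ∧ g x ≤ ρ})
        (F0.inf' hF0ne (fun p => αP p + βP p * ρ)) := by
    rintro ρ ⟨hρl, hρr⟩
    have hρle2 : ρ ≤ 2 := by linarith
    -- lower bound
    have hLB : ∀ x, x ∈ M → g x ≤ ρ →
        F0.inf' hF0ne (fun p => αP p + βP p * ρ) ≤ f x := by
      intro x hxM hxg
      obtain ⟨e1, he1, e2, he2, hv1, hv2, hvle⟩ := lemA ρ hρl hρle2 x hxM hxg
      have he1le0 : u e1 ≤ 0 := by
        rcases le_or_gt (u e1) 0 with h | h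
        · exact h
        · exfalso
          have := hρ0min e1 he1 h
          linarith
      by_cases hcase : ρ0 ≤ u e2
      · have hpF0 : (e1, e2) ∈ F0 := Finset.mem_filter.2
          ⟨Finset.mem_product.2 ⟨he1, he2⟩, he1le0, hcase⟩
        calc F0.inf' hF0ne (fun p => αP p + βP p * ρ) ≤ αP (e1, e2) + βP (e1, e2) * ρ :=
              Finset.inf'_le _ hpF0
          _ = interpVal (u e1, w e1) (u e2, w e2) ρ := (hφ _ hpF0 ρ).symm
          _ ≤ f x := hvle
      · have he2le0 : u e2 ≤ 0 := hnonpos e2 he2 (not_le.1 hcase)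
        have hρ00 : ρ = 0 := le_antisymm (le_trans hv2 he2le0) hρl
        have hue2 : u e2 = 0 := le_antisymm he2le0 (hρ00 ▸ hv2)
        have hval0 : ∀ e ∈ EF, u e = 0 → ∀ hmem : (e, eR) ∈ F0,
            αP (e, eR) + βP (e, eR) * ρ = w e := by
          intro e _ hue _
          rw [hρ00, hαP, hβP]
          simp only
          rw [hue, hueR]
          norm_num
        have hmF0 : ∀ e ∈ EF, u e ≤ 0 → (e, eR) ∈ F0 := fun e he hle =>
          Finset.mem_filter.2 ⟨Finset.mem_product.2 ⟨he, heREF⟩, hle,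
            by rw [hueR]; exact hρ0le2⟩
        by_cases hlt : u e1 < u e2
        · -- interp value is w e2
          have hne : u e2 - u e1 ≠ 0 := sub_ne_zero.2 (ne_of_gt hlt)
          have hval : interpVal (u e1, w e1) (u e2, w e2) ρ = w e2 := by
            rw [interpVal, if_pos hlt]
            simp only
            rw [hρ00, hue2]
            have hne1 : u e1 ≠ 0 := by
              intro h; rw [h, hue2] at hlt; exact lt_irrefl _ hlt
            field_simp
            ring
          have hpF0 : (e2, eR) ∈ F0 := hmF0 e2 he2 he2le0
          calc F0.inf' hF0ne (fun p => αP p + βP p * ρ) ≤ αP (e2, eR) + βP (e2, eR) * ρ :=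
                Finset.inf'_le _ hpF0
            _ = w e2 := hval0 e2 he2 hue2 hpF0
            _ = interpVal (u e1, w e1) (u e2, w e2) ρ := hval.symm
            _ ≤ f x := hvle
        · have hue1 : u e1 = 0 := le_antisymm (hρ00 ▸ hv1)
            (by rw [← hue2]; exact not_lt.1 hlt)
          have hval : interpVal (u e1, w e1) (u e2, w e2) ρ = min (w e1) (w e2) := by
            rw [interpVal, if_neg hlt]
          rcases le_total (w e1) (w e2) with hmin | hmin
          · have hpF0 : (e1, eR) ∈ F0 := hmF0 e1 he1 (le_of_eq hue1)
            calc F0.inf' hF0ne (fun p => αP p + βP p * ρ)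
                ≤ αP (e1, eR) + βP (e1, eR) * ρ := Finset.inf'_le _ hpF0
              _ = w e1 := hval0 e1 he1 hue1 hpF0
              _ = min (w e1) (w e2) := (min_eq_left hmin).symm
              _ = interpVal (u e1, w e1) (u e2, w e2) ρ := hval.symm
              _ ≤ f x := hvle
          · have hpF0 : (e2, eR) ∈ F0 := hmF0 e2 he2 he2le0
            calc F0.inf' hF0ne (fun p => αP p + βP p * ρ)
                ≤ αP (e2, eR) + βP (e2, eR) * ρ := Finset.inf'_le _ hpF0
              _ = w e2 := hval0 e2 he2 hue2 hpF0
              _ = min (w e1) (w e2) := (min_eq_right hmin).symm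
              _ = interpVal (u e1, w e1) (u e2, w e2) ρ := hval.symm
              _ ≤ f x := hvle
    constructor
    · -- the value is attained
      obtain ⟨p, hpF0, hpval⟩ := F0.exists_mem_eq_inf' hF0ne (fun p => αP p + βP p * ρ)
      obtain ⟨hpe1, hpe2⟩ := Finset.mem_product.1 (Finset.mem_filter.1 hpF0).1
      obtain ⟨hp1, hp2⟩ := (Finset.mem_filter.1 hpF0).2
      obtain ⟨x, hxFeas, hxle⟩ := lemB ρ hρl hρle2 p.1 hpe1 p.2 hpe2
        (le_trans hp1 hρl) (le_trans (by linarith) hp2)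
      refine ⟨x, hxFeas, ?_⟩
      have h1 : f x ≤ F0.inf' hF0ne (fun p => αP p + βP p * ρ) := by
        rw [hpval]
        calc f x ≤ interpVal (u p.1, w p.1) (u p.2, w p.2) ρ := hxle
          _ = αP p + βP p * ρ := hφ p hpF0 ρ
      exact le_antisymm h1 (hLB x hxFeas.1 hxFeas.2)
    · rintro v ⟨x, hxmem, rfl⟩
      exact hLB x hxmem.1 hxmem.2
  -- conclude with the lexicographic lemma
  obtain ⟨ρ1, hρ1pos, p0, hp0F0, hlex⟩ := finite_min_eventually_affine F0 hF0ne αP βP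
  refine ⟨min ρ1 (ρ0/2), lt_min hρ1pos (by linarith), αP p0, βP p0, ?_⟩
  rintro ρ ⟨h0, h1⟩
  have hk := hKey0 ρ ⟨h0, le_trans h1 (min_le_right _ _)⟩
  rwa [hlex ρ ⟨h0, le_trans h1 (min_le_left _ _)⟩] at hk


theorem abstract_stability
    {W : Type*} [NormedAddCommGroup W] [NormedSpace ℝ W] [FiniteDimensional ℝ W]
    {ιM ιf ιg : Type*} [Fintype ιM] [Fintype ιf] [Fintype ιg]
    (mA : ιM → W → ℝ) (hmA : ∀ k, IsLinearMap ℝ (mA k)) (mb : ιM → ℝ)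
    (Af : ιf → W → ℝ) (hAf : ∀ i, IsLinearMap ℝ (Af i)) (cf : ιf → ℝ)
    (Ag : ιg → W → ℝ) (hAg : ∀ i, IsLinearMap ℝ (Ag i)) (cg : ιg → ℝ)
    (M : Set W) (hM : M = {x | ∀ k, mA k x ≤ mb k}) (hMcpt : IsCompact M)
    (f g : W → ℝ)
    (hf : ∀ x, f x = ∑ i, |Af i x + cf i|)
    (hg : ∀ x, g x = ∑ i, |Ag i x + cg i|)
    (hfle : ∀ x ∈ M, f x ≤ 1) (hgle : ∀ x ∈ M, g x ≤ 1)
    (hg0 : ∃ x ∈ M, g x ≤ 0)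
    (S : ℝ → Set W)
    (hS : ∀ ρ, S ρ = {x | (x ∈ M ∧ g x ≤ ρ) ∧ ∀ y, (y ∈ M ∧ g y ≤ ρ) → f x ≤ f y}) :
    Filter.Tendsto (fun ρ => Metric.hausdorffDist (S ρ) (S 0))
      (nhdsWithin 0 (Set.Ioi 0)) (nhds 0) := by
  classical
  obtain ⟨ρ2, hρ2pos, A, B, hKey⟩ :=
    key_prop mA hmA mb Af hAf cf Ag hAg cg M hM hMcpt f g hf hg hfle hgle hg0
  have hgcont : Continuous g := by
    have hgfun : g = fun x => ∑ i, |Ag i x + cg i| := funext hg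
    rw [hgfun]
    exact continuous_finset_sum _ fun i _ =>
      ((lin_continuous (hAg i)).add continuous_const).abs
  have hfcont : Continuous f := by
    have hffun : f = fun x => ∑ i, |Af i x + cf i| := funext hf
    rw [hffun]
    exact continuous_finset_sum _ fun i _ =>
      ((lin_continuous (hAf i)).add continuous_const).abs
  have hK0 := hKey 0 ⟨le_refl 0, le_of_lt hρ2pos⟩
  obtain ⟨x0m, hx0mem, hx0val⟩ := hK0.1
  have hx0S0 : x0m ∈ S 0 := by
    rw [hS]
    exact ⟨hx0mem, fun y hy => hx0val.symm ▸ hK0.2 ⟨y, hy, rfl⟩⟩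
  have hS0ne : (S 0).Nonempty := ⟨x0m, hx0S0⟩
  obtain ⟨C, hC⟩ := hMcpt.isBounded.exists_norm_le
  set C' := max C 0 with hC'
  have hC'nn : 0 ≤ C' := le_max_right _ _
  have hC'le : ∀ x ∈ M, ‖x‖ ≤ C' := fun x hx => le_trans (hC x hx) (le_max_left _ _)
  -- upper semicontinuity direction
  have husc : ∀ ε > 0, ∃ δ > 0, ∀ ρ, 0 < ρ → ρ ≤ δ →
      ∀ x ∈ S ρ, ∃ y ∈ S 0, dist x y ≤ ε := by
    intro ε hε
    set V : ℕ → Set W := fun n => M ∩ ({x | g x ≤ 1/(n+1)} ∩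
      ({x | f x ≤ A + B * 0} ∩ {x | ε ≤ Metric.infDist x (S 0)})) with hV
    by_cases hne : ∀ n, (V n).Nonempty
    · exfalso
      have hVsub : ∀ n, V n ⊆ M := fun n => Set.inter_subset_left
      have hVclosed : ∀ n, IsClosed (V n) := fun n =>
        hMcpt.isClosed.inter ((isClosed_le hgcont continuous_const).inter
          ((isClosed_le hfcont continuous_const).inter
            (isClosed_le continuous_const (Metric.continuous_infDist_pt _))))
      have hVdec : ∀ n, V (n+1) ⊆ V n := by
        intro n x hx
        obtain ⟨h1, h2, h3, h4⟩ := hx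
        refine ⟨h1, ?_, h3, h4⟩
        have h2' : g x ≤ 1/((n:ℝ)+1+1) := by
          have := h2
          simp only [Set.mem_setOf_eq] at this
          push_cast at this
          linarith
        show g x ≤ 1/((n:ℝ)+1)
        refine le_trans h2' ?_
        apply one_div_le_one_div_of_le
        · positivity
        · linarith
      obtain ⟨x, hx⟩ := IsCompact.nonempty_iInter_of_sequence_nonempty_isCompact_isClosed
        V hVdec hne (hMcpt.of_isClosed_subset (hVclosed 0) (hVsub 0)) hVclosed
      rw [Set.mem_iInter] at hx
      have hgx : g x ≤ 0 := by
        by_contra hgt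
        push_neg at hgt
        obtain ⟨n, hn⟩ := exists_nat_one_div_lt hgt
        have := (hx n).2.1
        simp only [Set.mem_setOf_eq] at this
        linarith
      have hxM : x ∈ M := (hx 0).1
      have hxf : f x ≤ A + B * 0 := (hx 0).2.2.1
      have hxS0 : x ∈ S 0 := by
        rw [hS]
        exact ⟨⟨hxM, hgx⟩, fun y hy => le_trans hxf (hK0.2 ⟨y, hy, rfl⟩)⟩
      have hd := (hx 0).2.2.2
      simp only [Set.mem_setOf_eq] at hd
      rw [Metric.infDist_zero_of_mem hxS0] at hd
      linarith
    · push_neg at hne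
      obtain ⟨n0, hn0⟩ := hne
      refine ⟨1/(n0+1), by positivity, ?_⟩
      intro ρ hρpos hρle x hxS
      rw [hS] at hxS
      obtain ⟨⟨hxM, hxg⟩, hxmin⟩ := hxS
      have hxf : f x ≤ A + B * 0 := by
        rw [← hx0val]
        exact hxmin x0m ⟨hx0mem.1, le_trans hx0mem.2 hρpos.le⟩
      have hnotin : x ∉ V n0 := by rw [hn0]; exact Set.notMem_empty x
      have hlt : Metric.infDist x (S 0) < ε := by
        by_contra hcon
        push_neg at hcon
        exact hnotin ⟨hxM, le_trans hxg hρle, hxf, hcon⟩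
      obtain ⟨y, hyS0, hdy⟩ := (Metric.infDist_lt_iff hS0ne).1 hlt
      exact ⟨y, hyS0, le_of_lt hdy⟩
  -- lower semicontinuity direction
  obtain ⟨y2, hy2mem, hy2val⟩ := (hKey ρ2 ⟨hρ2pos.le, le_refl _⟩).1
  have hlsc : ∀ ρ, 0 < ρ → ρ ≤ ρ2 → ∀ x0 ∈ S 0,
      ∃ z ∈ S ρ, dist z x0 ≤ ρ / ρ2 * (2 * C') := by
    intro ρ hρpos hρle x0 hx0S
    rw [hS] at hx0S
    obtain ⟨⟨hx0M, hx0g⟩, hx0min⟩ := hx0S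
    have hfx0 : f x0 = A + B * 0 :=
      le_antisymm (hx0val ▸ hx0min x0m hx0mem) (hK0.2 ⟨x0, ⟨hx0M, hx0g⟩, rfl⟩)
    set t := ρ / ρ2 with ht
    have ht0 : 0 < t := div_pos hρpos hρ2pos
    have ht1 : t ≤ 1 := (div_le_one hρ2pos).2 hρle
    set z := (1 - t) • x0 + t • y2 with hz
    have hconvM : Convex ℝ M := hM ▸ polytope_convex mA hmA mb
    have hzM : z ∈ M := hconvM hx0M hy2mem.1 (by linarith) ht0.le (by ring)
    have htρ : t * ρ2 = ρ := div_mul_cancel₀ ρ (ne_of_gt hρ2pos)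
    have hgz : g z ≤ ρ := by
      have hcv : g z ≤ (1-t) * g x0 + t * g y2 := by
        rw [hg z, hg x0, hg y2]
        exact abs_aff_sum_convex Ag hAg cg x0 y2 (1 - t) t (by linarith) ht0.le (by ring)
      calc g z ≤ (1-t) * g x0 + t * g y2 := hcv
        _ ≤ (1-t) * 0 + t * ρ2 := add_le_add
            (mul_le_mul_of_nonneg_left hx0g (by linarith))
            (mul_le_mul_of_nonneg_left hy2mem.2 ht0.le)
        _ = ρ := by rw [mul_zero, zero_add, htρ]
    have hfz : f z ≤ A + B * ρ := by
      have hcv : f z ≤ (1-t) * f x0 + t * f y2 := by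
        rw [hf z, hf x0, hf y2]
        exact abs_aff_sum_convex Af hAf cf x0 y2 (1 - t) t (by linarith) ht0.le (by ring)
      calc f z ≤ (1-t) * f x0 + t * f y2 := hcv
        _ = (1-t)*(A + B*0) + t*(A + B*ρ2) := by rw [hfx0, hy2val]
        _ = A + B * (t * ρ2) := by ring
        _ = A + B * ρ := by rw [htρ]
    have hzS : z ∈ S ρ := by
      rw [hS]
      exact ⟨⟨hzM, hgz⟩, fun y hy =>
        le_trans hfz ((hKey ρ ⟨hρpos.le, hρle⟩).2 ⟨y, hy, rfl⟩)⟩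
    refine ⟨z, hzS, ?_⟩
    have hzx : z - x0 = t • (y2 - x0) := by rw [hz]; module
    rw [dist_eq_norm, hzx, norm_smul, Real.norm_eq_abs, abs_of_pos ht0]
    have hnb : ‖y2 - x0‖ ≤ 2 * C' := by
      calc ‖y2 - x0‖ ≤ ‖y2‖ + ‖x0‖ := norm_sub_le _ _
        _ ≤ C' + C' := add_le_add (hC'le y2 hy2mem.1) (hC'le x0 hx0M)
        _ = 2*C' := by ring
    calc t * ‖y2 - x0‖ ≤ t * (2*C') := mul_le_mul_of_nonneg_left hnb ht0.le
      _ = ρ / ρ2 * (2*C') := by rw [ht]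
  -- assemble
  rw [Metric.tendsto_nhds]
  intro ε hε
  obtain ⟨δ1, hδ1pos, husc'⟩ := husc (ε/2) (by linarith)
  set δ2 := ρ2 * (ε/2) / (2*C' + 1) with hδ2
  have hδ2pos : 0 < δ2 := by
    apply div_pos (by positivity)
    linarith
  set δ := min δ1 (min ρ2 δ2) with hδ
  have hδpos : 0 < δ := lt_min hδ1pos (lt_min hρ2pos hδ2pos)
  have hmemIoo : Set.Ioo (0:ℝ) δ ∈ nhdsWithin 0 (Set.Ioi 0) :=
    Ioo_mem_nhdsGT_of_mem ⟨le_refl 0, hδpos⟩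
  refine Filter.eventually_of_mem hmemIoo ?_
  rintro ρ ⟨hρ0, hρδ⟩
  have h1 : ∀ x ∈ S ρ, ∃ y ∈ S 0, dist x y ≤ ε/2 :=
    husc' ρ hρ0 (le_trans hρδ.le (min_le_left _ _))
  have h2 : ∀ y ∈ S 0, ∃ x ∈ S ρ, dist y x ≤ ε/2 := by
    intro y hy
    obtain ⟨z, hz, hdz⟩ := hlsc ρ hρ0
      (le_trans hρδ.le (le_trans (min_le_right _ _) (min_le_left _ _))) y hy
    refine ⟨z, hz, ?_⟩
    rw [dist_comm]
    refine le_trans hdz ?_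
    have hρleδ2 : ρ ≤ δ2 := le_trans hρδ.le
      (le_trans (min_le_right _ _) (min_le_right _ _))
    rw [hδ2] at hρleδ2
    have hmul : ρ * (2*C' + 1) ≤ ρ2 * (ε/2) :=
      (le_div_iff₀ (show (0:ℝ) < 2*C'+1 by linarith)).1 hρleδ2
    rw [div_mul_eq_mul_div, div_le_iff₀ hρ2pos]
    nlinarith [hρ0]
  have hhd : Metric.hausdorffDist (S ρ) (S 0) ≤ ε/2 :=
    Metric.hausdorffDist_le_of_mem_dist (by linarith) h1 h2
  rw [Real.dist_0_eq_abs, abs_of_nonneg Metric.hausdorffDist_nonneg]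
  linarith

end AuxDev

section Helpers

variable {X Y : Type*} [Fintype X] [Fintype Y]

lemma dTV_le_one {Z : Type*} [Fintype Z] {p q : Z → ℝ}
    (hp : IsProbDist p) (hq : IsProbDist q) : dTV p q ≤ 1 := by
  rw [dTV]
  have h : ∑ z, |p z - q z| ≤ ∑ z, (p z + q z) := by
    refine Finset.sum_le_sum fun z _ => ?_
    calc |p z - q z| ≤ |p z| + |q z| := abs_sub _ _
      _ = p z + q z := by rw [abs_of_nonneg (hp.1 z), abs_of_nonneg (hq.1 z)]
  rw [Finset.sum_add_distrib, hp.2, hq.2] at h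
  linarith

lemma pushforward_probdist {K : X → X → ℝ} {q : X → ℝ}
    (hK : IsMarkovKernel K) (hq : IsProbDist q) : IsProbDist (pushforward K q) := by
  constructor
  · intro x'
    exact Finset.sum_nonneg fun x _ => mul_nonneg ((hK x).1 x') (hq.1 x)
  · calc ∑ x', pushforward K q x' = ∑ x', ∑ x, K x' x * q x := rfl
      _ = ∑ x, ∑ x', K x' x * q x := Finset.sum_comm
      _ = ∑ x, (∑ x', K x' x) * q x := by
          refine Finset.sum_congr rfl fun x _ => ?_
          rw [Finset.sum_mul]
      _ = ∑ x, q x := by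
          refine Finset.sum_congr rfl fun x _ => ?_
          have h := (hK x).2
          simp only at h
          rw [h, one_mul]
      _ = 1 := hq.2

lemma repair_probdist {K : X → X → ℝ} {P : X × Y → ℝ}
    (hK : IsMarkovKernel K) (hP : IsProbDist P) : IsProbDist (repairJoint K P) := by
  constructor
  · intro z
    exact Finset.sum_nonneg fun x _ => mul_nonneg ((hK x).1 z.1) (hP.1 _)
  · calc ∑ z : X × Y, repairJoint K P z
        = ∑ x', ∑ y, ∑ x, K x' x * P (x, y) := by rw [Fintype.sum_prod_type]; rfl
      _ = ∑ x', ∑ x, ∑ y, K x' x * P (x, y) := by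
          exact Finset.sum_congr rfl fun x' _ => Finset.sum_comm
      _ = ∑ x, ∑ x', ∑ y, K x' x * P (x, y) := Finset.sum_comm
      _ = ∑ x, (∑ x', K x' x) * (∑ y, P (x, y)) := by
          refine Finset.sum_congr rfl fun x _ => ?_
          rw [Finset.sum_mul]
          refine Finset.sum_congr rfl fun x' _ => ?_
          rw [Finset.mul_sum]
      _ = ∑ x, ∑ y, P (x, y) := by
          refine Finset.sum_congr rfl fun x _ => ?_
          have h := (hK x).2
          simp only at h
          rw [h, one_mul]
      _ = ∑ z : X × Y, P z := (Fintype.sum_prod_type _).symm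
      _ = 1 := hP.2

lemma repairJoint_add (K K' : X → X → ℝ) (P : X × Y → ℝ) (z : X × Y) :
    repairJoint (K + K') P z = repairJoint K P z + repairJoint K' P z := by
  simp [repairJoint, add_mul, Finset.sum_add_distrib]

lemma repairJoint_smul (c : ℝ) (K : X → X → ℝ) (P : X × Y → ℝ) (z : X × Y) :
    repairJoint (c • K) P z = c * repairJoint K P z := by
  simp [repairJoint, Finset.mul_sum, mul_assoc]

lemma pushforward_add (K K' : X → X → ℝ) (q : X → ℝ) (x : X) :
    pushforward (K + K') q x = pushforward K q x + pushforward K' q x := by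
  simp [pushforward, add_mul, Finset.sum_add_distrib]

lemma pushforward_smul (c : ℝ) (K : X → X → ℝ) (q : X → ℝ) (x : X) :
    pushforward (c • K) q x = c * pushforward K q x := by
  simp [pushforward, Finset.mul_sum, mul_assoc]

end Helpers



/-- Proposition 1: the set of optimal pre-processing kernel pairs
for fairness level `ρ` converges (in Hausdorff distance) to the set of optimal
kernel pairs under exact statistical parity as `ρ → 0⁺`. -/
theorem solution_sets_hausdorff_tendsto
    {X Y : Type*} [Fintype X] [Fintype Y] [Nonempty X] [Nonempty Y]
    (π0 π1 : ℝ) (hπ0 : 0 ≤ π0) (hπ1 : 0 ≤ π1) (hπ : π0 + π1 = 1)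
    (P0 P1 : X × Y → ℝ) (hP0 : IsProbDist P0) (hP1 : IsProbDist P1)
    (Q0 Q1 : X → ℝ)
    (hQ0 : Q0 = fun x => ∑ y : Y, P0 (x, y))
    (hQ1 : Q1 = fun x => ∑ y : Y, P1 (x, y))
    (Feas : ℝ → Set ((X → X → ℝ) × (X → X → ℝ)))
    (hFeas : ∀ ρ : ℝ, Feas ρ =
      {KK | IsMarkovKernel KK.1 ∧ IsMarkovKernel KK.2 ∧
        dTV (pushforward KK.2 Q1) (pushforward KK.1 Q0) ≤ ρ})
    (obj : ((X → X → ℝ) × (X → X → ℝ)) → ℝ)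
    (hobj : obj = fun KK =>
      π0 * dTV (repairJoint KK.1 P0) P0 + π1 * dTV (repairJoint KK.2 P1) P1)
    (S : ℝ → Set ((X → X → ℝ) × (X → X → ℝ)))
    (hS : ∀ ρ : ℝ, S ρ = {KK ∈ Feas ρ | ∀ KK' ∈ Feas ρ, obj KK ≤ obj KK'}) :
    Filter.Tendsto (fun ρ => Metric.hausdorffDist (S ρ) (S 0))
      (nhdsWithin 0 (Set.Ioi 0)) (nhds 0) := by
  classical
  -- probability facts for the marginals
  have hQ0p : IsProbDist Q0 := by
    constructor
    · intro x
      rw [hQ0]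
      exact Finset.sum_nonneg fun y _ => hP0.1 _
    · rw [hQ0]
      simp only
      have h := hP0.2
      rw [Fintype.sum_prod_type] at h
      exact h
  have hQ1p : IsProbDist Q1 := by
    constructor
    · intro x
      rw [hQ1]
      exact Finset.sum_nonneg fun y _ => hP1.1 _
    · rw [hQ1]
      simp only
      have h := hP1.2
      rw [Fintype.sum_prod_type] at h
      exact h
  -- the data of the abstract problem
  set M : Set ((X → X → ℝ) × (X → X → ℝ)) :=
    {KK | IsMarkovKernel KK.1 ∧ IsMarkovKernel KK.2} with hMdef
  set gfun : ((X → X → ℝ) × (X → X → ℝ)) → ℝ :=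
    fun KK => dTV (pushforward KK.2 Q1) (pushforward KK.1 Q0) with hgfun
  set mA : ((Bool × X × X) ⊕ (Bool × X × Bool)) → ((X → X → ℝ) × (X → X → ℝ)) → ℝ :=
    Sum.elim (fun t KK => -((if t.1 then KK.1 else KK.2) t.2.1 t.2.2))
      (fun t KK => sg t.2.2 * ∑ x', (if t.1 then KK.1 else KK.2) x' t.2.1) with hmAdef
  set mb : ((Bool × X × X) ⊕ (Bool × X × Bool)) → ℝ :=
    Sum.elim (fun _ => 0) (fun t => sg t.2.2) with hmbdef
  set Af : ((X × Y) ⊕ (X × Y)) → ((X → X → ℝ) × (X → X → ℝ)) → ℝ :=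
    Sum.elim (fun z KK => (π0/2) * repairJoint KK.1 P0 z)
      (fun z KK => (π1/2) * repairJoint KK.2 P1 z) with hAfdef
  set cf : ((X × Y) ⊕ (X × Y)) → ℝ :=
    Sum.elim (fun z => -((π0/2) * P0 z)) (fun z => -((π1/2) * P1 z)) with hcfdef
  set Ag : X → ((X → X → ℝ) × (X → X → ℝ)) → ℝ :=
    fun x KK => (1/2) * (pushforward KK.2 Q1 x - pushforward KK.1 Q0 x) with hAgdef
  set cg : X → ℝ := fun _ => 0 with hcgdef
  -- linearity
  have hmAlin : ∀ k, IsLinearMap ℝ (mA k) := by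
    rintro (⟨b, x', x⟩ | ⟨b, x, s⟩)
    · cases b
      · exact ⟨fun p q => by
            show -((p + q).2 x' x) = -(p.2 x' x) + -(q.2 x' x)
            show -(p.2 x' x + q.2 x' x) = -(p.2 x' x) + -(q.2 x' x)
            ring,
          fun c p => by
            show -((c • p).2 x' x) = c • -(p.2 x' x)
            show -(c * p.2 x' x) = c * -(p.2 x' x)
            ring⟩
      · exact ⟨fun p q => by
            show -((p + q).1 x' x) = -(p.1 x' x) + -(q.1 x' x)
            show -(p.1 x' x + q.1 x' x) = -(p.1 x' x) + -(q.1 x' x)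
            ring,
          fun c p => by
            show -((c • p).1 x' x) = c • -(p.1 x' x)
            show -(c * p.1 x' x) = c * -(p.1 x' x)
            ring⟩
    · cases b
      · refine ⟨fun p q => ?_, fun c p => ?_⟩
        · show sg s * (∑ x'' : X, (p + q).2 x'' x)
            = sg s * (∑ x'' : X, p.2 x'' x) + sg s * (∑ x'' : X, q.2 x'' x)
          have h : ∀ x'' : X, (p + q).2 x'' x = p.2 x'' x + q.2 x'' x := fun _ => rfl
          rw [Finset.sum_congr rfl fun x'' _ => h x'', Finset.sum_add_distrib]
          ring
        · show sg s * (∑ x'' : X, (c • p).2 x'' x) = c • (sg s * ∑ x'' : X, p.2 x'' x)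
          have h : ∀ x'' : X, (c • p).2 x'' x = c * p.2 x'' x := fun _ => rfl
          rw [Finset.sum_congr rfl fun x'' _ => h x'', ← Finset.mul_sum, smul_eq_mul]
          ring
      · refine ⟨fun p q => ?_, fun c p => ?_⟩
        · show sg s * (∑ x'' : X, (p + q).1 x'' x)
            = sg s * (∑ x'' : X, p.1 x'' x) + sg s * (∑ x'' : X, q.1 x'' x)
          have h : ∀ x'' : X, (p + q).1 x'' x = p.1 x'' x + q.1 x'' x := fun _ => rfl
          rw [Finset.sum_congr rfl fun x'' _ => h x'', Finset.sum_add_distrib]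
          ring
        · show sg s * (∑ x'' : X, (c • p).1 x'' x) = c • (sg s * ∑ x'' : X, p.1 x'' x)
          have h : ∀ x'' : X, (c • p).1 x'' x = c * p.1 x'' x := fun _ => rfl
          rw [Finset.sum_congr rfl fun x'' _ => h x'', ← Finset.mul_sum, smul_eq_mul]
          ring
  have hAflin : ∀ i, IsLinearMap ℝ (Af i) := by
    rintro (z | z)
    · constructor
      · intro p q
        simp only [hAfdef, Sum.elim_inl]
        rw [show (p + q).1 = p.1 + q.1 from rfl, repairJoint_add]
        ring
      · intro c p
        simp only [hAfdef, Sum.elim_inl, smul_eq_mul]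
        rw [show (c • p).1 = c • p.1 from rfl, repairJoint_smul]
        ring
    · constructor
      · intro p q
        simp only [hAfdef, Sum.elim_inr]
        rw [show (p + q).2 = p.2 + q.2 from rfl, repairJoint_add]
        ring
      · intro c p
        simp only [hAfdef, Sum.elim_inr, smul_eq_mul]
        rw [show (c • p).2 = c • p.2 from rfl, repairJoint_smul]
        ring
  have hAglin : ∀ x, IsLinearMap ℝ (Ag x) := by
    intro x
    constructor
    · intro p q
      simp only [hAgdef]
      rw [show (p + q).2 = p.2 + q.2 from rfl, show (p + q).1 = p.1 + q.1 from rfl,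
        pushforward_add, pushforward_add]
      ring
    · intro c p
      simp only [hAgdef, smul_eq_mul]
      rw [show (c • p).2 = c • p.2 from rfl, show (c • p).1 = c • p.1 from rfl,
        pushforward_smul, pushforward_smul]
      ring
  -- polytope description of M
  have hMeq : M = {x | ∀ k, mA k x ≤ mb k} := by
    ext KK
    simp only [hMdef, Set.mem_setOf_eq]
    constructor
    · rintro ⟨h1, h2⟩ k
      rcases k with ⟨b, x', x⟩ | ⟨b, x, s⟩
      · cases b
        · show -(KK.2 x' x) ≤ 0
          exact neg_nonpos.2 ((h2 x).1 x')
        · show -(KK.1 x' x) ≤ 0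
          exact neg_nonpos.2 ((h1 x).1 x')
      · cases b
        · show sg s * (∑ x'' : X, KK.2 x'' x) ≤ sg s
          have hs : (∑ x'' : X, KK.2 x'' x) = 1 := (h2 x).2
          rw [hs, mul_one]
        · show sg s * (∑ x'' : X, KK.1 x'' x) ≤ sg s
          have hs : (∑ x'' : X, KK.1 x'' x) = 1 := (h1 x).2
          rw [hs, mul_one]
    · intro h
      constructor
      · intro x
        constructor
        · intro x'
          have h0 : -(KK.1 x' x) ≤ 0 := h (Sum.inl (true, x', x))
          show 0 ≤ KK.1 x' x
          linarith
        · have ht : sg true * (∑ x'' : X, KK.1 x'' x) ≤ sg true :=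
            h (Sum.inr (true, x, true))
          have hf : sg false * (∑ x'' : X, KK.1 x'' x) ≤ sg false :=
            h (Sum.inr (true, x, false))
          simp only [sg, if_true, if_false, Bool.false_eq_true, one_mul, neg_mul] at ht hf
          show (∑ x'' : X, KK.1 x'' x) = 1
          linarith
      · intro x
        constructor
        · intro x'
          have h0 : -(KK.2 x' x) ≤ 0 := h (Sum.inl (false, x', x))
          show 0 ≤ KK.2 x' x
          linarith
        · have ht : sg true * (∑ x'' : X, KK.2 x'' x) ≤ sg true :=
            h (Sum.inr (false, x, true))
          have hf : sg false * (∑ x'' : X, KK.2 x'' x) ≤ sg false :=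
            h (Sum.inr (false, x, false))
          simp only [sg, if_true, if_false, Bool.false_eq_true, one_mul, neg_mul] at ht hf
          show (∑ x'' : X, KK.2 x'' x) = 1
          linarith
  -- compactness of M
  have hMclosed : IsClosed M := by
    have : M = ⋂ k, {x | mA k x ≤ mb k} := by
      rw [hMeq]
      ext KK
      simp [Set.mem_iInter]
    rw [this]
    exact isClosed_iInter fun k =>
      isClosed_le (lin_continuous (hmAlin k)) continuous_const
  have hMbound : ∀ KK ∈ M, ‖KK‖ ≤ 1 := by
    rintro KK ⟨h1, h2⟩
    have hb : ∀ K : X → X → ℝ, IsMarkovKernel K → ‖K‖ ≤ 1 := by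
      intro K hK
      rw [pi_norm_le_iff_of_nonneg zero_le_one]
      intro x'
      rw [pi_norm_le_iff_of_nonneg zero_le_one]
      intro x
      rw [Real.norm_eq_abs, abs_le]
      have hnn : ∀ i, 0 ≤ K i x := fun i => (hK x).1 i
      constructor
      · linarith [hnn x']
      · calc K x' x ≤ ∑ x'', K x'' x :=
            Finset.single_le_sum (f := fun x'' => K x'' x)
              (fun i _ => hnn i) (Finset.mem_univ x')
          _ = 1 := by
            have := (hK x).2
            simpa using this
    rw [Prod.norm_def]
    exact max_le (hb _ h1) (hb _ h2)
  have hMcpt : IsCompact M :=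
    Metric.isCompact_of_isClosed_isBounded hMclosed
      (isBounded_iff_forall_norm_le.2 ⟨1, hMbound⟩)
  -- representations of obj and gfun
  have hfrep : ∀ KK, obj KK = ∑ i, |Af i KK + cf i| := by
    intro KK
    rw [hobj]
    simp only
    rw [Fintype.sum_sum_type]
    simp only [hAfdef, hcfdef, Sum.elim_inl, Sum.elim_inr]
    rw [dTV, dTV]
    have e0 : ∀ z : X × Y, |(π0/2) * repairJoint KK.1 P0 z + -((π0/2) * P0 z)|
        = (π0/2) * |repairJoint KK.1 P0 z - P0 z| := by
      intro z
      rw [show (π0/2) * repairJoint KK.1 P0 z + -((π0/2) * P0 z)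
          = (π0/2) * (repairJoint KK.1 P0 z - P0 z) by ring]
      rw [abs_mul, abs_of_nonneg (by linarith : (0:ℝ) ≤ π0/2)]
    have e1 : ∀ z : X × Y, |(π1/2) * repairJoint KK.2 P1 z + -((π1/2) * P1 z)|
        = (π1/2) * |repairJoint KK.2 P1 z - P1 z| := by
      intro z
      rw [show (π1/2) * repairJoint KK.2 P1 z + -((π1/2) * P1 z)
          = (π1/2) * (repairJoint KK.2 P1 z - P1 z) by ring]
      rw [abs_mul, abs_of_nonneg (by linarith : (0:ℝ) ≤ π1/2)]
    rw [Finset.sum_congr rfl fun z _ => e0 z, Finset.sum_congr rfl fun z _ => e1 z]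
    rw [← Finset.mul_sum, ← Finset.mul_sum]
    ring
  have hgrep : ∀ KK, gfun KK = ∑ x, |Ag x KK + cg x| := by
    intro KK
    rw [hgfun]
    simp only [hAgdef, hcgdef]
    rw [dTV]
    have e0 : ∀ x : X,
        |(1/2) * (pushforward KK.2 Q1 x - pushforward KK.1 Q0 x) + 0|
        = (1/2) * |pushforward KK.2 Q1 x - pushforward KK.1 Q0 x| := by
      intro x
      rw [add_zero, abs_mul, abs_of_nonneg (by norm_num : (0:ℝ) ≤ 1/2)]
    rw [Finset.sum_congr rfl fun x _ => e0 x, ← Finset.mul_sum]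
  -- bounds
  have hfle : ∀ KK ∈ M, obj KK ≤ 1 := by
    rintro KK ⟨h1, h2⟩
    rw [hobj]
    simp only
    have hd0 : dTV (repairJoint KK.1 P0) P0 ≤ 1 := dTV_le_one (repair_probdist h1 hP0) hP0
    have hd1 : dTV (repairJoint KK.2 P1) P1 ≤ 1 := dTV_le_one (repair_probdist h2 hP1) hP1
    calc π0 * dTV (repairJoint KK.1 P0) P0 + π1 * dTV (repairJoint KK.2 P1) P1
        ≤ π0 * 1 + π1 * 1 := add_le_add
          (mul_le_mul_of_nonneg_left hd0 hπ0) (mul_le_mul_of_nonneg_left hd1 hπ1)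
      _ = 1 := by rw [mul_one, mul_one, hπ]
  have hgle : ∀ KK ∈ M, gfun KK ≤ 1 := by
    rintro KK ⟨h1, h2⟩
    rw [hgfun]
    exact dTV_le_one (pushforward_probdist h2 hQ1p) (pushforward_probdist h1 hQ0p)
  -- exact parity is feasible
  have hg0 : ∃ KK ∈ M, gfun KK ≤ 0 := by
    have hcard : (0:ℝ) < (Fintype.card X : ℝ) := by
      exact_mod_cast Fintype.card_pos
    set Kc : X → X → ℝ := fun _ _ => (Fintype.card X : ℝ)⁻¹ with hKc
    have hKcM : IsMarkovKernel Kc := by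
      intro x
      constructor
      · intro x'
        positivity
      · simp only [hKc]
        rw [Finset.sum_const, Finset.card_univ, nsmul_eq_mul]
        field_simp
    have hpush : ∀ q : X → ℝ, IsProbDist q →
        pushforward Kc q = fun _ => (Fintype.card X : ℝ)⁻¹ := by
      intro q hq
      funext x'
      calc pushforward Kc q x' = ∑ x, (Fintype.card X : ℝ)⁻¹ * q x := rfl
        _ = (Fintype.card X : ℝ)⁻¹ * ∑ x, q x := by rw [← Finset.mul_sum]
        _ = (Fintype.card X : ℝ)⁻¹ := by rw [hq.2, mul_one]
    refine ⟨(Kc, Kc), ⟨hKcM, hKcM⟩, ?_⟩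
    rw [hgfun]
    simp only
    rw [hpush Q1 hQ1p, hpush Q0 hQ0p, dTV]
    simp
  -- solution sets in abstract form
  have hSeq : ∀ ρ, S ρ = {x | (x ∈ M ∧ gfun x ≤ ρ) ∧
      ∀ y, (y ∈ M ∧ gfun y ≤ ρ) → obj x ≤ obj y} := by
    intro ρ
    rw [hS ρ]
    ext KK
    simp only [Set.mem_setOf_eq, hFeas, hMdef, hgfun]
    constructor
    · rintro ⟨⟨h1, h2, h3⟩, h4⟩
      exact ⟨⟨⟨h1, h2⟩, h3⟩, fun y hy => h4 y ⟨hy.1.1, hy.1.2, hy.2⟩⟩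
    · rintro ⟨⟨⟨h1, h2⟩, h3⟩, h4⟩
      exact ⟨⟨h1, h2, h3⟩, fun y hy => h4 y ⟨⟨hy.1, hy.2.1⟩, hy.2.2⟩⟩
  exact abstract_stability mA hmAlin mb Af hAflin cf Ag hAglin cg M hMeq hMcpt
    obj gfun hfrep hgrep hfle hgle hg0 S hSeq
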